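/- Let s ≥ 2 be an integer, q_0 = 0, q_{n+1} = (q_n^s + s - 1)/s, and p_n = 1 - q_n. Then n · p_n → 2/(s-1) as n → ∞. -/

import Mathlib

open Filter Finset

lemma key_id (m : ℕ) (p : ℝ) :
    (1 - p) ^ (m + 2)
      = 1 - (m + 2 : ℝ) * p
        + p ^ 2 * ∑ j ∈ Finset.range (m + 1), (-p) ^ j * ((m + 2).choose (j + 2)) := by
  have h : (1 - p) ^ (m + 2) = ((-p) + 1) ^ (m + 2) := by ring_nf
  rw [h, add_pow, Finset.sum_range_succ', Finset.sum_range_succ']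
  have e : ∀ j ∈ Finset.range (m + 1),
      (-p) ^ (j + 1 + 1) * 1 ^ (m + 2 - (j + 1 + 1)) * ((m + 2).choose (j + 1 + 1) : ℝ)
        = p ^ 2 * ((-p) ^ j * ((m + 2).choose (j + 2))) := by
    intro j _
    push_cast
    ring
  rw [Finset.sum_congr rfl e, ← Finset.mul_sum]
  simp [Nat.choose_one_right]
  ring

theorem stmt_2 (s : ℕ) (hs : 2 ≤ s) (q : ℕ → ℝ)
    (hq0 : q 0 = 0) (hqrec : ∀ n, q (n+1) = (q n ^ s + s - 1) / s) :
    Filter.Tendsto (fun n : ℕ => (n : ℝ) * (1 - q n)) Filter.atTop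
      (nhds (2 / ((s : ℝ) - 1))) := by
  obtain ⟨m, rfl⟩ : ∃ m, s = m + 2 := ⟨s - 2, by omega⟩
  clear hs
  set p : ℕ → ℝ := fun n => 1 - q n with hp
  set P : ℝ → ℝ := fun x => ∑ j ∈ Finset.range (m + 1), (-x) ^ j * ((m + 2).choose (j + 2)) with hPdef
  have hM : (0 : ℝ) < (m : ℝ) + 2 := by positivity
  have hMne : ((m : ℝ) + 2) ≠ 0 := ne_of_gt hM
  -- recurrence for p
  have hrecp : ∀ n, p (n + 1) = (1 - (1 - p n) ^ (m + 2)) / ((m : ℝ) + 2) := by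
    intro n
    have := hqrec n
    simp only [hp] at *
    rw [this]
    have : q n = 1 - (1 - q n) := by ring
    push_cast
    field_simp
    ring
  -- key identity
  have hkey : ∀ x : ℝ, (1 - x) ^ (m + 2) = 1 - ((m : ℝ) + 2) * x + x ^ 2 * P x := by
    intro x
    have := key_id m x
    push_cast at this ⊢
    linarith [this]
  -- positivity and boundedness
  have hpos : ∀ n, 0 < p n ∧ p n ≤ 1 := by
    intro n
    induction n with
    | zero => constructor <;> simp [hp, hq0]
    | succ k ih =>
      obtain ⟨h1, h2⟩ := ih
      have hq1 : 0 ≤ 1 - p k := by linarith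
      have hq2 : 1 - p k < 1 := by linarith
      have hpow : (1 - p k) ^ (m + 2) < 1 := by
        calc (1 - p k) ^ (m + 2) ≤ (1 - p k) ^ 1 := by
              apply pow_le_pow_of_le_one hq1 hq2.le; omega
          _ < 1 := by simpa using hq2
      have hpow0 : 0 ≤ (1 - p k) ^ (m + 2) := by positivity
      rw [hrecp k]
      constructor
      · apply div_pos (by linarith) hM
      · rw [div_le_one hM]; linarith
  -- antitone
  have hanti : ∀ n, p (n + 1) ≤ p n := by
    intro n
    obtain ⟨h1, h2⟩ := hpos n
    have hb := one_add_mul_le_pow (a := -(p n)) (by linarith) (m + 2)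
    have hb' : 1 - ((m : ℝ) + 2) * p n ≤ (1 - p n) ^ (m + 2) := by
      have : (1 + -(p n)) = 1 - p n := by ring
      rw [this] at hb
      push_cast at hb
      linarith
    rw [hrecp n, div_le_iff₀ hM]
    nlinarith
  have hantitone : Antitone p := antitone_nat_of_succ_le hanti
  -- convergence to 0
  have hbdd : BddBelow (Set.range p) := ⟨0, by rintro x ⟨n, rfl⟩; exact (hpos n).1.le⟩
  have hL : Tendsto p atTop (nhds (⨅ n, p n)) := tendsto_atTop_ciInf hantitone hbdd
  set L : ℝ := ⨅ n, p n with hLdef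
  have hL0 : 0 ≤ L := le_ciInf fun n => (hpos n).1.le
  have hL1 : L ≤ 1 := le_trans (ciInf_le hbdd 0) (by simp [hp, hq0])
  have hLfix : L = (1 - (1 - L) ^ (m + 2)) / ((m : ℝ) + 2) := by
    have h1 : Tendsto (fun n => p (n + 1)) atTop (nhds L) :=
      hL.comp (tendsto_add_atTop_nat 1)
    have hc : Continuous (fun x : ℝ => (1 - (1 - x) ^ (m + 2)) / ((m : ℝ) + 2)) := by
      continuity
    have h2 : Tendsto (fun n => (1 - (1 - p n) ^ (m + 2)) / ((m : ℝ) + 2)) atTop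
        (nhds ((1 - (1 - L) ^ (m + 2)) / ((m : ℝ) + 2))) := (hc.tendsto L).comp hL
    have h3 : (fun n => p (n + 1)) = fun n => (1 - (1 - p n) ^ (m + 2)) / ((m : ℝ) + 2) := by
      funext n; exact hrecp n
    rw [h3] at h1
    exact tendsto_nhds_unique h1 h2
  have hLzero : L = 0 := by
    by_contra hne
    have hLpos : 0 < L := lt_of_le_of_ne hL0 (Ne.symm hne)
    -- geometric: 1 - (1-L)^(m+2) = L * ∑ (1-L)^k
    have hg := geom_sum_mul (1 - L) (m + 2)
    have hsum_lt : ∑ i ∈ Finset.range (m + 2), (1 - L) ^ i < (m : ℝ) + 2 := by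
      have : ∑ i ∈ Finset.range (m + 2), (1 - L) ^ i < ∑ i ∈ Finset.range (m + 2), (1 : ℝ) := by
        apply Finset.sum_lt_sum
        · intro k _
          exact pow_le_one₀ (by linarith) (by linarith)
        · exact ⟨1, by simp, by simpa using (by linarith : 1 - L < 1 ^ 1)⟩
      simpa using this
    have heq : ((m : ℝ) + 2) * L = 1 - (1 - L) ^ (m + 2) := by
      have h' := hLfix
      rw [eq_div_iff hMne] at h'
      linarith
    have heq2 : 1 - (1 - L) ^ (m + 2) = L * ∑ i ∈ Finset.range (m + 2), (1 - L) ^ i := by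
      nlinarith [hg]
    nlinarith
  rw [hLzero] at hL
  -- continuity of P
  have hPcont : Continuous P := by
    apply continuous_finset_sum
    intro j _
    exact (continuous_neg.pow j).mul continuous_const
  have hP0 : P 0 = ((m : ℝ) + 2) * ((m : ℝ) + 1) / 2 := by
    have h1 : P 0 = ∑ j ∈ Finset.range (m + 1),
        (if j = 0 then ((m + 2).choose (j + 2) : ℝ) else 0) := by
      apply Finset.sum_congr rfl
      intro j _
      cases j with
      | zero => simp
      | succ k => simp [zero_pow]
    rw [h1, Finset.sum_ite_eq' (Finset.range (m + 1)) 0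
      (fun j => ((m + 2).choose (j + 2) : ℝ))]
    simp [Nat.cast_choose_two ℝ (m + 2)]
    push_cast; ring_nf; simp
  -- difference identity
  have hd : ∀ n, 1 / p (n + 1) - 1 / p n
      = P (p n) / (((m : ℝ) + 2) - p n * P (p n)) := by
    intro n
    have ha := (hpos n).1
    have hb := (hpos (n + 1)).1
    have hane : p n ≠ 0 := ne_of_gt ha
    have hab : ((m : ℝ) + 2) * p (n + 1)
        = p n * (((m : ℝ) + 2) - p n * P (p n)) := by
      rw [hrecp n, hkey (p n)]
      field_simp
      ring
    have hDpos : 0 < ((m : ℝ) + 2) - p n * P (p n) := by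
      have h1 : 0 < p n * (((m : ℝ) + 2) - p n * P (p n)) := by
        rw [← hab]; positivity
      nlinarith
    have hDne : ((m : ℝ) + 2) - p n * P (p n) ≠ 0 := ne_of_gt hDpos
    have hbeq : p (n + 1) = p n * (((m : ℝ) + 2) - p n * P (p n)) / ((m : ℝ) + 2) := by
      rw [← hab]; field_simp
    rw [hbeq]
    field_simp
    ring
  -- limit of differences
  have hdtend : Tendsto (fun n => 1 / p (n + 1) - 1 / p n) atTop
      (nhds (((m : ℝ) + 1) / 2)) := by
    have h1 : Tendsto (fun n => P (p n)) atTop (nhds (P 0)) := (hPcont.tendsto 0).comp hL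
    have h2 : Tendsto (fun n => ((m : ℝ) + 2) - p n * P (p n)) atTop
        (nhds (((m : ℝ) + 2) - 0 * P 0)) := tendsto_const_nhds.sub (hL.mul h1)
    have h3 := h1.div h2 (by simpa using hMne)
    have h4 : P 0 / (((m : ℝ) + 2) - 0 * P 0) = ((m : ℝ) + 1) / 2 := by
      rw [hP0]; field_simp; ring
    rw [h4] at h3
    exact h3.congr fun n => (hd n).symm
  have hcesaro := hdtend.cesaro
  have htel : ∀ n, ∑ i ∈ Finset.range n, (1 / p (i + 1) - 1 / p i) = 1 / p n - 1 := by
    intro n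
    rw [Finset.sum_range_sub (fun i => 1 / p i)]
    simp [hp, hq0]
  have hcesaro2 : Tendsto (fun n : ℕ => (1 / p n - 1) / n) atTop
      (nhds (((m : ℝ) + 1) / 2)) := by
    refine hcesaro.congr fun n => ?_
    rw [htel n, inv_mul_eq_div]
  have h4 : Tendsto (fun n : ℕ => (1 / p n) / n) atTop (nhds (((m : ℝ) + 1) / 2)) := by
    have h5 := hcesaro2.add tendsto_one_div_atTop_nhds_zero_nat
    rw [add_zero] at h5
    refine h5.congr fun n => ?_
    rw [← add_div]
    ring_nf
  have hApos : (0 : ℝ) < ((m : ℝ) + 1) / 2 := by positivity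
  have h6 := h4.inv₀ (ne_of_gt hApos)
  have h7 : ∀ n : ℕ, ((1 / p n) / (n : ℝ))⁻¹ = (n : ℝ) * p n := by
    intro n
    rw [inv_div, one_div, div_eq_mul_inv, inv_inv]
  have h8 : (((m : ℝ) + 1) / 2)⁻¹ = 2 / ((↑(m + 2) : ℝ) - 1) := by
    push_cast
    rw [inv_div]
    ring_nf
  rw [← h8]
  exact h6.congr h7
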